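/- arXiv:math/0409571 — 5 statements merged into one kernel-verified Lean document; each statement's English description precedes it below -/
import Mathlib

section
/- Let V be a finite-dimensional complex vector space and n a natural number. The centralizer, inside the algebra End_ℂ(⊗ⁿV) of all linear endomorphisms of the n-th tensor power, of the set of permutation operators {ρ(σ) : σ ∈ S_n} equals the subalgebra generated by the diagonal operators {g^{⊗n} : g ∈ GL(V)}. -/
open scoped TensorProduct

/-- The permutation operator `ρ(σ)` on the `n`-th tensor power `⊗ⁿ V`, sending
`v₁ ⊗ … ⊗ vₙ` to `v_{σ⁻¹(1)} ⊗ … ⊗ v_{σ⁻¹(n)}`. -/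
noncomputable def permOperator (V : Type*) [AddCommGroup V] [Module ℂ V] (n : ℕ)
    (σ : Equiv.Perm (Fin n)) :
    Module.End ℂ (⨂[ℂ] _ : Fin n, V) :=
  (PiTensorProduct.reindex ℂ (fun _ : Fin n => V) σ).toLinearMap

/-- The diagonal operator `g^{⊗n}` on `⊗ⁿ V`, sending `v₁ ⊗ … ⊗ vₙ` to
`g v₁ ⊗ … ⊗ g vₙ`. -/
noncomputable def diagOperator (V : Type*) [AddCommGroup V] [Module ℂ V] (n : ℕ)
    (g : V ≃ₗ[ℂ] V) :
    Module.End ℂ (⨂[ℂ] _ : Fin n, V) :=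
  PiTensorProduct.map (fun _ : Fin n => g.toLinearMap)

namespace SchurWeyl

variable {V : Type*} [AddCommGroup V] [Module ℂ V] {n : ℕ}

/-- `Φ : ⨂ⁿ End(V) → End(⨂ⁿ V)` -/
noncomputable def Phi (V : Type*) [AddCommGroup V] [Module ℂ V] (n : ℕ) :
    (⨂[ℂ] _ : Fin n, Module.End ℂ V) →ₗ[ℂ] Module.End ℂ (⨂[ℂ] _ : Fin n, V) :=
  PiTensorProduct.piTensorHomMap

lemma Phi_tprod (a : Fin n → Module.End ℂ V) (v : Fin n → V) :
    Phi V n (PiTensorProduct.tprod ℂ a) (PiTensorProduct.tprod ℂ v)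
      = PiTensorProduct.tprod ℂ (fun i => a i (v i)) := by
  simp [Phi]

lemma perm_mul_perm (σ τ : Equiv.Perm (Fin n)) :
    permOperator V n σ * permOperator V n τ = permOperator V n (σ * τ) := by
  ext v
  simp [permOperator, Module.End.mul_apply]
  rfl

lemma perm_one : permOperator V n 1 = 1 := by
  ext v
  simp only [permOperator, LinearEquiv.coe_coe, PiTensorProduct.reindex_tprod,
    Module.End.one_apply, LinearMap.compMultilinearMap_apply]
  exact congr_arg _ (funext fun i => rfl)

lemma perm_mul_inv (σ : Equiv.Perm (Fin n)) :
    permOperator V n σ * permOperator V n σ⁻¹ = 1 := by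
  rw [perm_mul_perm, mul_inv_cancel, perm_one]

/-- reindexing on `⨂ⁿ End V` -/
noncomputable def rE (V : Type*) [AddCommGroup V] [Module ℂ V] (n : ℕ) (σ : Equiv.Perm (Fin n)) :
    (⨂[ℂ] _ : Fin n, Module.End ℂ V) →ₗ[ℂ] (⨂[ℂ] _ : Fin n, Module.End ℂ V) :=
  (PiTensorProduct.reindex ℂ (fun _ : Fin n => Module.End ℂ V) σ).toLinearMap

lemma Phi_equivariant (σ : Equiv.Perm (Fin n)) (x : ⨂[ℂ] _ : Fin n, Module.End ℂ V) :
    Phi V n (rE V n σ x) = permOperator V n σ * Phi V n x * permOperator V n σ⁻¹ := by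
  have h : ∀ y : ⨂[ℂ] _ : Fin n, Module.End ℂ V,
      Phi V n (rE V n σ y) * permOperator V n σ = permOperator V n σ * Phi V n y := by
    intro y
    induction y using PiTensorProduct.induction_on with
    | smul_tprod c a =>
        ext v
        simp [rE, Phi, permOperator, Module.End.mul_apply]
    | add y z hy hz =>
        simp only [map_add, add_mul, mul_add, hy, hz]
  have := h x
  calc Phi V n (rE V n σ x)
      = Phi V n (rE V n σ x) * (permOperator V n σ * permOperator V n σ⁻¹) := by
        rw [perm_mul_inv, mul_one]
    _ = permOperator V n σ * Phi V n x * permOperator V n σ⁻¹ := by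
        rw [← mul_assoc, this]


section Surjectivity

variable {V : Type*} [AddCommGroup V] [Module ℂ V] [FiniteDimensional ℂ V] {n : ℕ}

section BasisT

variable (V n)

/-- basis vectors of the tensor power -/
noncomputable def tB (m : Fin n → Fin (Module.finrank ℂ V)) : ⨂[ℂ] _ : Fin n, V :=
  PiTensorProduct.tprod ℂ (fun i => Module.finBasis ℂ V (m i))

noncomputable def psi : (⨂[ℂ] _ : Fin n, V) →ₗ[ℂ] ((Fin n → Fin (Module.finrank ℂ V)) → ℂ) :=
  PiTensorProduct.lift (MultilinearMap.pi (fun m => (MultilinearMap.mkPiAlgebra ℂ (Fin n) ℂ).compLinearMap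
    (fun i => (Module.finBasis ℂ V).coord (m i))))

noncomputable def tauF : ((Fin n → Fin (Module.finrank ℂ V)) → ℂ) →ₗ[ℂ] ⨂[ℂ] _ : Fin n, V where
  toFun f := ∑ m, f m • tB V n m
  map_add' f g := by simp [add_smul, Finset.sum_add_distrib]
  map_smul' c f := by simp [smul_smul, Finset.smul_sum]

variable {V n}

lemma psi_tprod (v : Fin n → V) (m : Fin n → Fin (Module.finrank ℂ V)) :
    psi V n (PiTensorProduct.tprod ℂ v) m
      = ∏ i, (Module.finBasis ℂ V).coord (m i) (v i) := by
  simp [psi]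

lemma prod_delta (m m' : Fin n → Fin (Module.finrank ℂ V)) :
    (∏ i, (Module.finBasis ℂ V).coord (m' i) (Module.finBasis ℂ V (m i)))
      = if m = m' then (1:ℂ) else 0 := by
  classical
  have h : ∀ i, (Module.finBasis ℂ V).coord (m' i) (Module.finBasis ℂ V (m i))
      = if m i = m' i then (1:ℂ) else 0 := by
    intro i
    rw [Module.Basis.coord_apply, Module.Basis.repr_self, Finsupp.single_apply]
  simp only [h]
  by_cases hm : m = m'
  · subst hm; simp
  · rw [if_neg hm]
    obtain ⟨i, hi⟩ := Function.ne_iff.mp hm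
    exact Finset.prod_eq_zero (Finset.mem_univ i) (if_neg hi)

lemma psi_tB (m m' : Fin n → Fin (Module.finrank ℂ V)) :
    psi V n (tB V n m) m' = if m = m' then (1:ℂ) else 0 := by
  rw [tB, psi_tprod, prod_delta]

lemma tprod_expand (v : Fin n → V) :
    PiTensorProduct.tprod ℂ v
      = ∑ m : Fin n → Fin (Module.finrank ℂ V),
          (∏ i, (Module.finBasis ℂ V).coord (m i) (v i)) • tB V n m := by
  classical
  set b := Module.finBasis ℂ V
  have hv : v = fun i => ∑ k, b.repr (v i) k • b k := by
    funext i
    exact (b.sum_repr (v i)).symm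
  conv_lhs => rw [hv]
  rw [MultilinearMap.map_sum (PiTensorProduct.tprod ℂ) (fun i k => b.repr (v i) k • b k)]
  refine Finset.sum_congr rfl fun m _ => ?_
  rw [MultilinearMap.map_smul_univ]
  simp [tB, Module.Basis.coord_apply, b]

lemma tauF_psi (x : ⨂[ℂ] _ : Fin n, V) : tauF V n (psi V n x) = x := by
  induction x using PiTensorProduct.induction_on with
  | smul_tprod c v =>
      rw [map_smul, map_smul]
      congr 1
      show (∑ m, psi V n (PiTensorProduct.tprod ℂ v) m • tB V n m) = _
      conv_rhs => rw [tprod_expand v]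
      exact Finset.sum_congr rfl fun m _ => by rw [psi_tprod]
  | add y z hy hz => rw [map_add, map_add, hy, hz]

lemma psi_tauF (f : (Fin n → Fin (Module.finrank ℂ V)) → ℂ) : psi V n (tauF V n f) = f := by
  classical
  show psi V n (∑ m, f m • tB V n m) = f
  funext m'
  rw [map_sum]
  simp only [Pi.smul_apply, Finset.sum_apply, map_smul]
  simp only [psi_tB, smul_eq_mul, mul_ite, mul_one, mul_zero]
  simp

/-- The basis of the tensor power. -/
noncomputable def basisT : Module.Basis (Fin n → Fin (Module.finrank ℂ V)) ℂ (⨂[ℂ] _ : Fin n, V) :=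
  Module.Basis.ofRepr <| LinearEquiv.ofLinear
    ((Finsupp.linearEquivFunOnFinite ℂ ℂ _).symm.toLinearMap ∘ₗ psi V n)
    (tauF V n ∘ₗ (Finsupp.linearEquivFunOnFinite ℂ ℂ _).toLinearMap)
    (by
      ext g
      simp [psi_tauF])
    (by
      ext x
      simp [tauF_psi])

lemma basisT_repr (x : ⨂[ℂ] _ : Fin n, V) (m : Fin n → Fin (Module.finrank ℂ V)) :
    (basisT (V := V) (n := n)).repr x m = psi V n x m := rfl

lemma basisT_apply (m : Fin n → Fin (Module.finrank ℂ V)) :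
    basisT (V := V) (n := n) m = tB V n m := by
  classical
  apply (basisT (V := V) (n := n)).repr.injective
  ext m'
  rw [Module.Basis.repr_self, basisT_repr, psi_tB, Finsupp.single_apply]

lemma Phi_surjective : Function.Surjective (Phi V n) := by
  classical
  intro f
  set b := Module.finBasis ℂ V with hb
  set c := basisT (V := V) (n := n) with hc
  set tp : (Fin n → Fin (Module.finrank ℂ V)) × (Fin n → Fin (Module.finrank ℂ V)) →
      (⨂[ℂ] _ : Fin n, Module.End ℂ V) :=
    fun p => PiTensorProduct.tprod ℂ (fun i => ((b.coord (p.2 i)).smulRight (b (p.1 i)))) with htp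
  refine ⟨∑ p : (Fin n → Fin (Module.finrank ℂ V)) × (Fin n → Fin (Module.finrank ℂ V)),
    (c.repr (f (c p.2)) p.1) • tp p, ?_⟩
  have hval : ∀ p : (Fin n → Fin (Module.finrank ℂ V)) × (Fin n → Fin (Module.finrank ℂ V)),
      ∀ m'' : Fin n → Fin (Module.finrank ℂ V),
      Phi V n (tp p) (c m'') = (if m'' = p.2 then (1:ℂ) else 0) • c p.1 := by
    intro p m''
    rw [hc, basisT_apply, tB, htp]
    show Phi V n (PiTensorProduct.tprod ℂ _) (PiTensorProduct.tprod ℂ _) = _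
    rw [Phi, PiTensorProduct.piTensorHomMap_tprod_tprod]
    have h2 : (fun i => ((b.coord (p.2 i)).smulRight (b (p.1 i))) (b (m'' i)))
        = fun i => (b.coord (p.2 i) (b (m'' i))) • b (p.1 i) := rfl
    rw [h2, MultilinearMap.map_smul_univ, prod_delta, basisT_apply, tB]
  refine Module.Basis.ext c fun m'' => ?_
  rw [map_sum, LinearMap.sum_apply]
  calc ∑ p : _ × _, (Phi V n ((c.repr (f (c p.2)) p.1) • tp p)) (c m'')
      = ∑ p : _ × _, (c.repr (f (c p.2)) p.1) • (Phi V n (tp p) (c m'')) := by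
        refine Finset.sum_congr rfl fun p _ => ?_
        rw [map_smul, LinearMap.smul_apply]
    _ = ∑ p : _ × _, (if m'' = p.2 then (c.repr (f (c p.2)) p.1) • c p.1 else 0) := by
        refine Finset.sum_congr rfl fun p _ => ?_
        rw [hval]
        split_ifs <;> simp
    _ = ∑ m, ∑ m', (if m'' = m' then (c.repr (f (c m')) m) • c m else 0) :=
        Fintype.sum_prod_type _
    _ = ∑ m, c.repr (f (c m'')) m • c m := by
        refine Finset.sum_congr rfl fun m _ => ?_
        rw [Finset.sum_ite_eq]
        simp
    _ = f (c m'') := Module.Basis.sum_repr c (f (c m''))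

end BasisT


end Surjectivity

section Polarization

variable {M : Type*} [AddCommGroup M] [Module ℂ M] {n : ℕ}

lemma sum_powerset_neg_one_pow_card_C (A : Finset (Fin n)) :
    (∑ T ∈ A.powerset, (-1 : ℂ) ^ T.card) = if A = ∅ then 1 else 0 := by
  classical
  have h := congrArg (Int.cast : ℤ → ℂ) (Finset.sum_powerset_neg_one_pow_card (x := A))
  push_cast at h
  exact h

lemma coeff_sum (r : Fin n → Fin n) :
    (∑ S : Finset (Fin n), if (∀ i, r i ∈ S) then ((-1 : ℂ) ^ (Sᶜ.card)) else 0)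
      = if Function.Bijective r then 1 else 0 := by
  classical
  set R : Finset (Fin n) := Finset.image r Finset.univ with hR
  have hcond : ∀ S : Finset (Fin n), (∀ i, r i ∈ S) ↔ R ⊆ S := by
    intro S
    constructor
    · intro h x hx
      obtain ⟨i, _, rfl⟩ := Finset.mem_image.mp hx
      exact h i
    · intro h i
      exact h (Finset.mem_image.mpr ⟨i, Finset.mem_univ i, rfl⟩)
  have step1 : (∑ S : Finset (Fin n), if (∀ i, r i ∈ S) then ((-1 : ℂ) ^ (Sᶜ.card)) else 0)
      = ∑ S ∈ Finset.univ.filter (fun S => R ⊆ S), (-1 : ℂ) ^ (Sᶜ.card) := by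
    rw [Finset.sum_filter]
    exact Finset.sum_congr rfl fun S _ => if_congr (hcond S) rfl rfl
  have step2 : (∑ S ∈ Finset.univ.filter (fun S => R ⊆ S), (-1 : ℂ) ^ (Sᶜ.card))
      = ∑ T ∈ Rᶜ.powerset, (-1 : ℂ) ^ ((Rᶜ \ T).card) := by
    refine Finset.sum_nbij' (fun S => S \ R) (fun T => R ∪ T) ?_ ?_ ?_ ?_ ?_
    · intro S hS
      rw [Finset.mem_powerset]
      intro x hx
      rw [Finset.mem_sdiff] at hx
      exact Finset.mem_compl.mpr hx.2
    · intro T hT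
      rw [Finset.mem_filter]
      exact ⟨Finset.mem_univ _, Finset.subset_union_left⟩
    · intro S hS
      rw [Finset.mem_filter] at hS
      exact Finset.union_sdiff_of_subset hS.2
    · intro T hT
      rw [Finset.mem_powerset] at hT
      apply Finset.union_sdiff_cancel_left
      rw [Finset.disjoint_left]
      intro x hx hxT
      exact Finset.mem_compl.mp (hT hxT) hx
    · intro S hS
      rw [Finset.mem_filter] at hS
      have hsub : R ⊆ S := hS.2
      congr 2
      ext x
      simp only [Finset.mem_compl, Finset.mem_sdiff]
      have := @hsub x
      tauto
  have step3 : (∑ T ∈ Rᶜ.powerset, (-1 : ℂ) ^ ((Rᶜ \ T).card))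
      = ∑ T ∈ Rᶜ.powerset, (-1 : ℂ) ^ (T.card) := by
    refine Finset.sum_nbij' (fun T => Rᶜ \ T) (fun T => Rᶜ \ T) ?_ ?_ ?_ ?_ ?_
    · intro T _; exact Finset.mem_powerset.mpr (Finset.sdiff_subset)
    · intro T _; exact Finset.mem_powerset.mpr (Finset.sdiff_subset)
    · intro T hT; exact Finset.sdiff_sdiff_eq_self (Finset.mem_powerset.mp hT)
    · intro T hT; exact Finset.sdiff_sdiff_eq_self (Finset.mem_powerset.mp hT)
    · intro T _; rfl
  have hbij : (Rᶜ = ∅) ↔ Function.Bijective r := by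
    rw [Finset.compl_eq_empty_iff, ← Finite.surjective_iff_bijective]
    constructor
    · intro h y
      have : y ∈ R := h ▸ Finset.mem_univ y
      obtain ⟨i, _, rfl⟩ := Finset.mem_image.mp this
      exact ⟨i, rfl⟩
    · intro h
      ext y
      obtain ⟨i, rfl⟩ := h y
      simp [hR]
  rw [step1, step2, step3, sum_powerset_neg_one_pow_card_C]
  exact if_congr hbij rfl rfl

/-- Polarization: the symmetrization of a pure tensor lies in the span of the `n`-th
tensor powers. -/
lemma polarization (a : Fin n → M) :
    (∑ σ : Equiv.Perm (Fin n), PiTensorProduct.tprod ℂ (fun i => a (σ i)))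
      ∈ Submodule.span ℂ
        {w : ⨂[ℂ] _ : Fin n, M | ∃ m : M, w = PiTensorProduct.tprod ℂ (fun _ => m)} := by
  classical
  have key : (∑ σ : Equiv.Perm (Fin n), PiTensorProduct.tprod ℂ (fun i => a (σ i)))
      = ∑ S : Finset (Fin n), ((-1 : ℂ) ^ (Sᶜ.card)) •
          PiTensorProduct.tprod ℂ (fun _ : Fin n => ∑ i ∈ S, a i) := by
    have expand : ∀ S : Finset (Fin n),
        (PiTensorProduct.tprod ℂ (fun _ : Fin n => ∑ i ∈ S, a i) : ⨂[ℂ] _ : Fin n, M)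
          = ∑ r : Fin n → Fin n, if (∀ i, r i ∈ S) then
              PiTensorProduct.tprod ℂ (fun i => a (r i)) else 0 := by
      intro S
      have h := MultilinearMap.map_sum_finset (PiTensorProduct.tprod ℂ (s := fun _ : Fin n => M))
        (fun (_ : Fin n) (j : Fin n) => a j) (fun _ : Fin n => S)
      have hps : Fintype.piFinset (fun _ : Fin n => S)
          = Finset.univ.filter (fun r : Fin n → Fin n => ∀ i, r i ∈ S) := by
        ext r
        simp [Fintype.mem_piFinset]
      rw [hps, Finset.sum_filter] at h
      exact h
    calc (∑ σ : Equiv.Perm (Fin n), PiTensorProduct.tprod ℂ (fun i => a (σ i)))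
        = ∑ r ∈ Finset.univ.filter (fun r : Fin n → Fin n => Function.Bijective r),
            PiTensorProduct.tprod ℂ (fun i => a (r i)) := by
          refine Finset.sum_nbij' (fun σ : Equiv.Perm (Fin n) => (⇑σ : Fin n → Fin n))
            (fun r => if h : Function.Bijective r then Equiv.ofBijective r h else 1)
            ?_ ?_ ?_ ?_ ?_
          · intro σ _
            exact Finset.mem_filter.mpr ⟨Finset.mem_univ _, σ.bijective⟩
          · intro r _
            exact Finset.mem_univ _
          · intro σ _
            rw [dif_pos σ.bijective]
            ext x
            rfl
          · intro r hr
            rw [dif_pos ((Finset.mem_filter.mp hr).2)]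
            rfl
          · intro σ _
            rfl
      _ = ∑ r : Fin n → Fin n,
            (if Function.Bijective r then (1:ℂ) else 0) • PiTensorProduct.tprod ℂ (fun i => a (r i)) := by
          rw [Finset.sum_filter]
          refine Finset.sum_congr rfl fun r _ => by split_ifs <;> simp
      _ = ∑ r : Fin n → Fin n,
            (∑ S : Finset (Fin n), if (∀ i, r i ∈ S) then ((-1 : ℂ) ^ (Sᶜ.card)) else 0) •
              PiTensorProduct.tprod ℂ (fun i => a (r i)) := by
          refine Finset.sum_congr rfl fun r _ => by rw [coeff_sum]
      _ = ∑ S : Finset (Fin n), ((-1 : ℂ) ^ (Sᶜ.card)) •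
            PiTensorProduct.tprod ℂ (fun _ : Fin n => ∑ i ∈ S, a i) := by
          simp_rw [Finset.sum_smul, ite_smul, zero_smul]
          rw [Finset.sum_comm]
          refine Finset.sum_congr rfl fun S _ => ?_
          rw [expand S, Finset.smul_sum]
          refine Finset.sum_congr rfl fun r _ => ?_
          split_ifs <;> simp
  rw [key]
  refine Submodule.sum_mem _ fun S _ => Submodule.smul_mem _ _ (Submodule.subset_span ?_)
  exact ⟨_, rfl⟩

end Polarization

section Vandermonde

variable {V : Type*} [AddCommGroup V] [Module ℂ V] [FiniteDimensional ℂ V] {n : ℕ}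

lemma mem_span_of_vandermonde {M : Type*} [AddCommGroup M] [Module ℂ M] {N : ℕ}
    (t : Fin N → ℂ) (ht : Function.Injective t) (c : Fin N → M) (k : Fin N) :
    c k ∈ Submodule.span ℂ (Set.range fun j => ∑ m : Fin N, t j ^ (m : ℕ) • c m) := by
  classical
  set Vm := Matrix.vandermonde t with hVm
  have hdet : IsUnit Vm.det := by
    rw [hVm, Matrix.det_vandermonde]
    rw [isUnit_iff_ne_zero]
    rw [Finset.prod_ne_zero_iff]
    intro i _
    rw [Finset.prod_ne_zero_iff]
    intro j hj
    rw [Finset.mem_Ioi] at hj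
    exact sub_ne_zero.mpr (fun h => absurd (ht h) (ne_of_gt hj))
  have hinv : Vm⁻¹ * Vm = 1 := Matrix.nonsing_inv_mul Vm hdet
  have key : c k = ∑ j : Fin N, (Vm⁻¹ k j) • ∑ m : Fin N, t j ^ (m : ℕ) • c m := by
    calc c k = ∑ m : Fin N, ((1 : Matrix (Fin N) (Fin N) ℂ) k m) • c m := by
          rw [Finset.sum_congr rfl (fun m _ => by rw [Matrix.one_apply])]
          simp only [ite_smul, one_smul, zero_smul]
          rw [Finset.sum_ite_eq]
          simp
      _ = ∑ m : Fin N, ((Vm⁻¹ * Vm) k m) • c m := by rw [hinv]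
      _ = ∑ m : Fin N, ∑ j : Fin N, (Vm⁻¹ k j * Vm j m) • c m := by
          refine Finset.sum_congr rfl fun m _ => ?_
          rw [Matrix.mul_apply, Finset.sum_smul]
      _ = ∑ j : Fin N, ∑ m : Fin N, (Vm⁻¹ k j * Vm j m) • c m := Finset.sum_comm
      _ = ∑ j : Fin N, (Vm⁻¹ k j) • ∑ m : Fin N, t j ^ (m : ℕ) • c m := by
          refine Finset.sum_congr rfl fun j _ => ?_
          rw [Finset.smul_sum]
          refine Finset.sum_congr rfl fun m _ => ?_
          rw [smul_smul, hVm]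
          rfl
  rw [key]
  exact Submodule.sum_mem _ fun j _ =>
    Submodule.smul_mem _ _ (Submodule.subset_span ⟨j, rfl⟩)

variable {V : Type*} [AddCommGroup V] [Module ℂ V] [FiniteDimensional ℂ V] {n : ℕ}

lemma bad_set_finite (a : Module.End ℂ V) :
    {t : ℂ | ¬ IsUnit (a + t • (1 : Module.End ℂ V))}.Finite := by
  have h : {t : ℂ | ¬ IsUnit (a + t • (1 : Module.End ℂ V))}
      = Neg.neg ⁻¹' (spectrum ℂ a) := by
    ext t
    simp only [Set.mem_setOf_eq, Set.mem_preimage, spectrum.mem_iff]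
    rw [Module.algebraMap_end_eq_smul_id]
    have : (-t) • (LinearMap.id : Module.End ℂ V) - a = -(a + t • 1) := by
      rw [neg_smul]
      ext v
      simp [sub_eq_add_neg]
    rw [this, IsUnit.neg_iff]
  rw [h]
  exact (Module.End.finite_spectrum a).preimage (neg_injective.injOn)

/-- `a^{⊗n}` lies in the span of the `g^{⊗n}` for invertible `g`. -/
lemma tprod_const_mem_span_units (a : Module.End ℂ V) :
    (PiTensorProduct.tprod ℂ (fun _ : Fin n => a))
      ∈ Submodule.span ℂ
        {w : ⨂[ℂ] _ : Fin n, Module.End ℂ V |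
          ∃ g : V ≃ₗ[ℂ] V, w = PiTensorProduct.tprod ℂ (fun _ => g.toLinearMap)} := by
  classical
  -- the coefficients of the polynomial expansion
  set z : Finset (Fin n) → ⨂[ℂ] _ : Fin n, Module.End ℂ V :=
    fun S => PiTensorProduct.tprod ℂ
      (S.piecewise (fun _ => a) (fun _ => (1 : Module.End ℂ V))) with hz
  set c : Fin (n+1) → ⨂[ℂ] _ : Fin n, Module.End ℂ V :=
    fun k => ∑ S ∈ Finset.univ.filter
      (fun S : Finset (Fin n) => Sᶜ.card = (k : ℕ)), z S with hc
  have expand : ∀ t : ℂ,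
      (PiTensorProduct.tprod ℂ (fun _ : Fin n => a + t • 1) : ⨂[ℂ] _ : Fin n, Module.End ℂ V)
        = ∑ k : Fin (n+1), t ^ (k : ℕ) • c k := by
    intro t
    have h1 : (PiTensorProduct.tprod ℂ (fun _ : Fin n => a + t • 1) :
        ⨂[ℂ] _ : Fin n, Module.End ℂ V)
        = ∑ S : Finset (Fin n), t ^ (Sᶜ.card) • z S := by
      have h0 := MultilinearMap.map_add_univ
        (PiTensorProduct.tprod ℂ (s := fun _ : Fin n => Module.End ℂ V))
        (fun _ => a) (fun _ => t • 1)
      rw [show ((fun _ => a) + fun _ => t • (1 : Module.End ℂ V)) = fun _ : Fin n => a + t • 1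
        from rfl] at h0
      rw [h0]
      refine Finset.sum_congr rfl fun S _ => ?_
      have harg : S.piecewise (fun _ => a) (fun _ => t • (1 : Module.End ℂ V))
          = Sᶜ.piecewise
              (fun i => t • (S.piecewise (fun _ => a) (fun _ => (1 : Module.End ℂ V)) i))
              (S.piecewise (fun _ => a) (fun _ => (1 : Module.End ℂ V))) := by
        funext i
        by_cases h : i ∈ S
        · rw [Finset.piecewise_eq_of_mem _ _ _ h,
            Finset.piecewise_eq_of_notMem _ _ _ (by simpa using h),
            Finset.piecewise_eq_of_mem _ _ _ h]
        · rw [Finset.piecewise_eq_of_notMem _ _ _ h,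
            Finset.piecewise_eq_of_mem _ _ _ (by simpa using h),
            Finset.piecewise_eq_of_notMem _ _ _ h]
      rw [harg, MultilinearMap.map_piecewise_smul, Finset.prod_const]
    rw [h1]
    rw [← Finset.sum_fiberwise Finset.univ
      (fun S : Finset (Fin n) => (⟨Sᶜ.card, by
        have := Finset.card_le_univ Sᶜ
        simp only [Finset.card_univ, Fintype.card_fin] at this
        omega⟩ : Fin (n+1)))
      (fun S => t ^ (Sᶜ.card) • z S)]
    refine Finset.sum_congr rfl fun k _ => ?_
    rw [hc]
    rw [Finset.smul_sum]
    refine Finset.sum_congr (by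
      ext S
      simp [Fin.ext_iff]) fun S hS => ?_
    rw [Finset.mem_filter] at hS
    rw [hS.2]
  have hc0 : c 0 = PiTensorProduct.tprod ℂ (fun _ : Fin n => a) := by
    have hfil : Finset.univ.filter (fun S : Finset (Fin n) => Sᶜ.card = ((0 : Fin (n+1)) : ℕ))
        = {Finset.univ} := by
      ext S
      simp [Finset.card_eq_zero, Finset.compl_eq_empty_iff]
    show (∑ S ∈ Finset.univ.filter
      (fun S : Finset (Fin n) => Sᶜ.card = ((0 : Fin (n+1)) : ℕ)), z S) = _
    rw [hfil, Finset.sum_singleton]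
    show PiTensorProduct.tprod ℂ _ = _
    rw [Finset.piecewise_univ]
  -- choose n+1 distinct good parameters
  have hinf : {t : ℂ | ¬ IsUnit (a + t • (1 : Module.End ℂ V))}ᶜ.Infinite :=
    Set.Finite.infinite_compl (bad_set_finite a)
  set emb := hinf.natEmbedding with hemb
  set tt : Fin (n+1) → ℂ := fun j => (emb (j : ℕ) : ℂ) with htt
  have htinj : Function.Injective tt := by
    intro x y h
    exact Fin.val_injective (emb.injective (Subtype.val_injective h))
  have htunit : ∀ j, IsUnit (a + tt j • (1 : Module.End ℂ V)) := by
    intro j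
    have := (emb (j : ℕ)).2
    rw [Set.mem_compl_iff, Set.mem_setOf_eq, not_not] at this
    exact this
  have hmem := mem_span_of_vandermonde tt htinj c 0
  rw [hc0] at hmem
  refine Submodule.span_le.mpr ?_ hmem
  rw [Set.range_subset_iff]
  intro j
  rw [SetLike.mem_coe, ← expand (tt j)]
  apply Submodule.subset_span
  refine ⟨LinearMap.GeneralLinearGroup.toLinearEquiv (htunit j).unit, ?_⟩
  have hg : ((LinearMap.GeneralLinearGroup.toLinearEquiv (htunit j).unit).toLinearMap)
      = a + tt j • 1 := by
    ext v
    exact congrFun (congrArg (fun (f : Module.End ℂ V) => ⇑f) (htunit j).unit_spec) v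
  exact congr_arg _ (funext fun i => hg.symm)


end Vandermonde

section Main

variable {V : Type*} [AddCommGroup V] [Module ℂ V] [FiniteDimensional ℂ V] {n : ℕ}

lemma diag_comm_perm (g : V ≃ₗ[ℂ] V) (σ : Equiv.Perm (Fin n)) :
    permOperator V n σ * diagOperator V n g = diagOperator V n g * permOperator V n σ := by
  ext v
  simp [permOperator, diagOperator, Module.End.mul_apply]

lemma sym_mem_span (x : ⨂[ℂ] _ : Fin n, Module.End ℂ V) :
    (∑ σ : Equiv.Perm (Fin n), rE V n σ x)
      ∈ Submodule.span ℂ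
        {w : ⨂[ℂ] _ : Fin n, Module.End ℂ V |
          ∃ a : Module.End ℂ V, w = PiTensorProduct.tprod ℂ (fun _ => a)} := by
  induction x using PiTensorProduct.induction_on with
  | smul_tprod c a =>
      have hswap : (∑ σ : Equiv.Perm (Fin n), PiTensorProduct.tprod ℂ (fun i => a (σ⁻¹ i)))
          = ∑ σ : Equiv.Perm (Fin n), PiTensorProduct.tprod ℂ (fun i => a (σ i)) := by
        refine Finset.sum_nbij' (fun σ => σ⁻¹) (fun σ => σ⁻¹)
          (fun _ _ => Finset.mem_univ _) (fun _ _ => Finset.mem_univ _)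
          (fun σ _ => inv_inv σ) (fun σ _ => inv_inv σ) (fun σ _ => rfl)
      have h2 : ∀ σ : Equiv.Perm (Fin n), rE V n σ (c • PiTensorProduct.tprod ℂ a)
          = c • PiTensorProduct.tprod ℂ (fun i => a (σ⁻¹ i)) := by
        intro σ
        rw [map_smul]
        congr 1
        rw [rE]
        show PiTensorProduct.reindex ℂ (fun _ : Fin n => Module.End ℂ V) σ
          (PiTensorProduct.tprod ℂ a) = _
        rw [PiTensorProduct.reindex_tprod]
        rfl
      have h3 : (∑ σ : Equiv.Perm (Fin n), rE V n σ (c • PiTensorProduct.tprod ℂ a))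
          = c • ∑ σ : Equiv.Perm (Fin n), PiTensorProduct.tprod ℂ (fun i => a (σ i)) :=
        calc (∑ σ : Equiv.Perm (Fin n), rE V n σ (c • PiTensorProduct.tprod ℂ a))
            = ∑ σ : Equiv.Perm (Fin n), c • PiTensorProduct.tprod ℂ (fun i => a (σ⁻¹ i)) :=
              Finset.sum_congr rfl fun σ _ => h2 σ
          _ = c • ∑ σ : Equiv.Perm (Fin n), PiTensorProduct.tprod ℂ (fun i => a (σ⁻¹ i)) :=
              (Finset.smul_sum).symm
          _ = c • ∑ σ : Equiv.Perm (Fin n), PiTensorProduct.tprod ℂ (fun i => a (σ i)) := by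
              rw [hswap]
      rw [h3]
      exact Submodule.smul_mem _ _ (polarization a)
  | add y z hy hz =>
      have : (∑ σ : Equiv.Perm (Fin n), rE V n σ (y + z))
          = (∑ σ : Equiv.Perm (Fin n), rE V n σ y)
            + ∑ σ : Equiv.Perm (Fin n), rE V n σ z := by
        rw [← Finset.sum_add_distrib]
        exact Finset.sum_congr rfl fun σ _ => map_add _ _ _
      rw [this]
      exact Submodule.add_mem _ hy hz

end Main

theorem centralizer_perm_eq_adjoin_diag' (V : Type*) [AddCommGroup V] [Module ℂ V]
    [FiniteDimensional ℂ V] (n : ℕ) :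
    Subalgebra.centralizer ℂ
        {f : Module.End ℂ (⨂[ℂ] _ : Fin n, V) | ∃ σ : Equiv.Perm (Fin n), f = permOperator V n σ}
      = Algebra.adjoin ℂ
        {f : Module.End ℂ (⨂[ℂ] _ : Fin n, V) | ∃ g : V ≃ₗ[ℂ] V, f = diagOperator V n g} := by
  classical
  set P : Set (Module.End ℂ (⨂[ℂ] _ : Fin n, V)) :=
    {f | ∃ σ : Equiv.Perm (Fin n), f = permOperator V n σ} with hP
  set D : Set (Module.End ℂ (⨂[ℂ] _ : Fin n, V)) :=
    {f | ∃ g : V ≃ₗ[ℂ] V, f = diagOperator V n g} with hD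
  refine le_antisymm ?_ ?_
  · -- centralizer ≤ adjoin
    intro f hf
    rw [Subalgebra.mem_centralizer_iff] at hf
    have hcomm : ∀ σ : Equiv.Perm (Fin n), permOperator V n σ * f = f * permOperator V n σ :=
      fun σ => hf (permOperator V n σ) ⟨σ, rfl⟩
    obtain ⟨x, rfl⟩ := Phi_surjective (V := V) (n := n) f
    set y := ∑ σ : Equiv.Perm (Fin n), rE V n σ x with hy
    have hPhiy : Phi V n y = (n.factorial : ℂ) • Phi V n x := by
      rw [hy, map_sum]
      have : ∀ σ : Equiv.Perm (Fin n), Phi V n (rE V n σ x) = Phi V n x := by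
        intro σ
        rw [Phi_equivariant, hcomm, mul_assoc, perm_mul_inv, mul_one]
      rw [Finset.sum_congr rfl fun σ _ => this σ]
      rw [Finset.sum_const, Finset.card_univ, Fintype.card_perm, Fintype.card_fin]
      rw [← Nat.cast_smul_eq_nsmul ℂ]
    have hfac : (n.factorial : ℂ) ≠ 0 := Nat.cast_ne_zero.mpr n.factorial_ne_zero
    have hfeq : Phi V n x = Phi V n ((n.factorial : ℂ)⁻¹ • y) := by
      rw [map_smul, hPhiy, smul_smul, inv_mul_cancel₀ hfac, one_smul]
    set S1 : Set (⨂[ℂ] _ : Fin n, Module.End ℂ V) :=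
      {w | ∃ a : Module.End ℂ V, w = PiTensorProduct.tprod ℂ (fun _ => a)} with hS1
    set S2 : Set (⨂[ℂ] _ : Fin n, Module.End ℂ V) :=
      {w | ∃ g : V ≃ₗ[ℂ] V, w = PiTensorProduct.tprod ℂ (fun _ => g.toLinearMap)} with hS2
    have hx' : (n.factorial : ℂ)⁻¹ • y ∈ Submodule.span ℂ S1 :=
      Submodule.smul_mem _ _ (sym_mem_span x)
    have hS1S2 : Submodule.span ℂ S1 ≤ Submodule.span ℂ S2 := by
      rw [Submodule.span_le]
      rintro w ⟨a, rfl⟩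
      exact tprod_const_mem_span_units a
    have hx'2 : (n.factorial : ℂ)⁻¹ • y ∈ Submodule.span ℂ S2 := hS1S2 hx'
    have hmap : Phi V n ((n.factorial : ℂ)⁻¹ • y)
        ∈ Submodule.span ℂ (Phi V n '' S2) := by
      rw [← Submodule.map_span]
      exact Submodule.mem_map_of_mem hx'2
    have himg : Phi V n '' S2 ⊆ D := by
      rintro _ ⟨w, ⟨g, rfl⟩, rfl⟩
      refine ⟨g, ?_⟩
      rw [Phi, PiTensorProduct.piTensorHomMap_tprod_eq_map]
      rfl
    have hspanD : Submodule.span ℂ (Phi V n '' S2)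
        ≤ Subalgebra.toSubmodule (Algebra.adjoin ℂ D) := by
      rw [Submodule.span_le]
      exact fun w hw => Algebra.subset_adjoin (himg hw)
    rw [hfeq]
    exact hspanD hmap
  · -- adjoin ≤ centralizer
    refine Algebra.adjoin_le ?_
    rintro _ ⟨g, rfl⟩
    rw [SetLike.mem_coe, Subalgebra.mem_centralizer_iff]
    rintro _ ⟨σ, rfl⟩
    exact diag_comm_perm g σ

end SchurWeyl

/-- The centralizer, inside `End_ℂ(⊗ⁿV)`, of the set of permutation operators equals
the subalgebra generated by the diagonal operators `g^{⊗n}`, `g ∈ GL(V)`. -/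
theorem centralizer_perm_eq_adjoin_diag (V : Type*) [AddCommGroup V] [Module ℂ V]
    [FiniteDimensional ℂ V] (n : ℕ) :
    Subalgebra.centralizer ℂ
        {f : Module.End ℂ (⨂[ℂ] _ : Fin n, V) | ∃ σ : Equiv.Perm (Fin n), f = permOperator V n σ}
      = Algebra.adjoin ℂ
        {f : Module.End ℂ (⨂[ℂ] _ : Fin n, V) | ∃ g : V ≃ₗ[ℂ] V, f = diagOperator V n g} :=
  SchurWeyl.centralizer_perm_eq_adjoin_diag' V n
end

section
/- Let A be a complex unital Banach algebra, P, Q ∈ A, and c ∈ ℝ. If the Weyl commutation relation exp(isP)·exp(itQ) = e^{icst}·(exp(itQ)·exp(isP)) holds for all s, t ∈ ℝ, then the elements P and Q satisfy the Heisenberg commutation relation P·Q − Q·P = −(ic)·1, where 1 is the unit of A. -/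
open NormedSpace

lemma exp_real_deriv {A : Type*} [NormedRing A] [NormedAlgebra ℂ A] [CompleteSpace A]
    (x : A) (s₀ : ℝ) :
    HasDerivAt (fun s : ℝ => NormedSpace.exp ((s : ℂ) • x)) (NormedSpace.exp ((s₀ : ℂ) • x) * x) s₀ := by
  have h := (hasDerivAt_exp_smul_const (𝕂 := ℂ) x ((s₀ : ℂ))).scomp s₀
    Complex.ofRealCLM.hasDerivAt
  simp at h
  exact h

/-- If the Weyl commutation relation
`exp(isP)·exp(itQ) = e^{icst}·(exp(itQ)·exp(isP))` holds for all real `s, t`, then the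
Heisenberg commutation relation `P·Q − Q·P = −(ic)·1` holds. -/
theorem weyl_implies_heisenberg (A : Type*) [NormedRing A] [NormedAlgebra ℂ A]
    [CompleteSpace A] (P Q : A) (c : ℝ)
    (hW : ∀ s t : ℝ,
      NormedSpace.exp ((Complex.I * s) • P) * NormedSpace.exp ((Complex.I * t) • Q)
        = Complex.exp (Complex.I * c * s * t) •
            (NormedSpace.exp ((Complex.I * t) • Q) * NormedSpace.exp ((Complex.I * s) • P))) :
    P * Q - Q * P = (-(Complex.I * c)) • (1 : A) := by
  set x : A := Complex.I • P with hx
  set y : A := Complex.I • Q with hy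
  have hW' : ∀ s t : ℝ,
      NormedSpace.exp ((s : ℂ) • x) * NormedSpace.exp ((t : ℂ) • y)
        = Complex.exp (Complex.I * c * s * t) •
            (NormedSpace.exp ((t : ℂ) • y) * NormedSpace.exp ((s : ℂ) • x)) := by
    intro s t
    have := hW s t
    rwa [show (Complex.I * s) • P = (s : ℂ) • x by rw [hx, smul_smul, mul_comm],
      show (Complex.I * t) • Q = (t : ℂ) • y by rw [hy, smul_smul, mul_comm]] at this
  -- Step 1: differentiate in s at 0
  have step1 : ∀ t : ℝ,
      x * NormedSpace.exp ((t : ℂ) • y)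
        = (Complex.I * c * t) • NormedSpace.exp ((t : ℂ) • y) + NormedSpace.exp ((t : ℂ) • y) * x := by
    intro t
    have hF : HasDerivAt (fun s : ℝ => NormedSpace.exp ((s : ℂ) • x) * NormedSpace.exp ((t : ℂ) • y))
        (x * NormedSpace.exp ((t : ℂ) • y)) 0 := by
      have := (exp_real_deriv x 0).mul_const (NormedSpace.exp ((t : ℂ) • y))
      simpa [exp_zero] using this
    have hφ : HasDerivAt (fun s : ℝ => Complex.exp (Complex.I * c * s * t))
        (Complex.I * c * t) 0 := by
      have h1 : HasDerivAt (fun z : ℂ => Complex.exp (Complex.I * c * t * z))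
          (Complex.I * c * t) (0 : ℂ) := by
        simpa using ((hasDerivAt_id (0 : ℂ)).const_mul (Complex.I * c * t)).cexp
      refine (h1.comp_ofReal (z := 0)).congr_of_eventuallyEq ?_
      filter_upwards with s
      ring_nf
    have hg : HasDerivAt (fun s : ℝ => NormedSpace.exp ((t : ℂ) • y) * NormedSpace.exp ((s : ℂ) • x))
        (NormedSpace.exp ((t : ℂ) • y) * x) 0 := by
      have := (exp_real_deriv x 0).const_mul (NormedSpace.exp ((t : ℂ) • y))
      simpa [exp_zero, mul_assoc] using this
    have hG := hφ.smul hg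
    have hF' : HasDerivAt (fun s : ℝ => Complex.exp (Complex.I * c * s * t) •
        (NormedSpace.exp ((t : ℂ) • y) * NormedSpace.exp ((s : ℂ) • x)))
        (x * NormedSpace.exp ((t : ℂ) • y)) 0 :=
      hF.congr_of_eventuallyEq (Filter.Eventually.of_forall fun s => (hW' s t).symm)
    have huniq := hF'.unique hG
    rw [huniq]
    simp [exp_zero]
    rw [add_comm]
  -- Step 2: differentiate step1 in t at 0
  have hL : HasDerivAt (fun t : ℝ => x * NormedSpace.exp ((t : ℂ) • y)) (x * y) 0 := by
    have := (exp_real_deriv y 0).const_mul x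
    simpa [exp_zero, mul_assoc] using this
  have hR : HasDerivAt (fun t : ℝ =>
      (Complex.I * c * t) • NormedSpace.exp ((t : ℂ) • y) + NormedSpace.exp ((t : ℂ) • y) * x)
      ((Complex.I * c) • (1 : A) + y * x) 0 := by
    have hφ : HasDerivAt (fun t : ℝ => (Complex.I * (c : ℂ) * t)) (Complex.I * c) 0 := by
      have h1 : HasDerivAt (fun z : ℂ => Complex.I * (c : ℂ) * z) (Complex.I * c) (0 : ℂ) := by
        simpa using (hasDerivAt_id (0 : ℂ)).const_mul (Complex.I * (c : ℂ))
      exact h1.comp_ofReal (z := 0)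
    have h2 := hφ.smul (exp_real_deriv y 0)
    have h3 : HasDerivAt (fun t : ℝ => NormedSpace.exp ((t : ℂ) • y) * x) (y * x) 0 := by
      have := (exp_real_deriv y 0).mul_const x
      simpa [exp_zero] using this
    have := h2.add h3
    simp [exp_zero] at this
    exact this
  have key := hL.unique (hR.congr_of_eventuallyEq
    (Filter.Eventually.of_forall fun t => step1 t))
  -- key : x * y = (I*c) • 1 + y * x
  rw [hx, hy] at key
  have hxy : (Complex.I • P) * (Complex.I • Q) = (-1 : ℂ) • (P * Q) := by
    rw [smul_mul_smul_comm, Complex.I_mul_I]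
  have hyx : (Complex.I • Q) * (Complex.I • P) = (-1 : ℂ) • (Q * P) := by
    rw [smul_mul_smul_comm, Complex.I_mul_I]
  rw [hxy, hyx] at key
  have : (-1 : ℂ) • (P * Q) - (-1 : ℂ) • (Q * P) = (Complex.I * c) • (1 : A) := by
    rw [key]; abel
  calc P * Q - Q * P = -((-1 : ℂ) • (P * Q) - (-1 : ℂ) • (Q * P)) := by
        simp [neg_smul, one_smul]; abel
    _ = (-(Complex.I * c)) • (1 : A) := by rw [this, neg_smul]
end

section
/- Let A be a complex unital Banach algebra, P, Q ∈ A, and c ∈ ℝ. If P·Q − Q·P = −(ic)·1, then the Weyl commutation relation holds: for all s, t ∈ ℝ, exp(isP)·exp(itQ) = e^{icst}·(exp(itQ)·exp(isP)). -/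
open NormedSpace Nat

lemma pow_comm_central {A : Type*} [NormedRing A] [NormedAlgebra ℂ A]
    (a b : A) (μ : ℂ) (h : a * b = b * a + μ • 1) :
    ∀ n : ℕ, a ^ (n + 1) * b = b * a ^ (n + 1) + (((n : ℂ) + 1) * μ) • a ^ n := by
  intro n
  induction n with
  | zero => simpa [one_mul] using h
  | succ n ih =>
    have h2 : a ^ (n + 1 + 1) = a * a ^ (n + 1) := pow_succ' a (n + 1)
    rw [h2, mul_assoc, ih, mul_add, mul_smul_comm, ← mul_assoc, h, add_mul,
      smul_mul_assoc, one_mul, mul_assoc, ← pow_succ' a (n + 1), ← pow_succ' a n]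
    push_cast
    module

lemma exp_mul_central {A : Type*} [NormedRing A] [NormedAlgebra ℂ A]
    [CompleteSpace A] (a b : A) (μ : ℂ) (h : a * b - b * a = μ • 1) :
    exp a * b = b * exp a + μ • exp a := by
  have h' : a * b = b * a + μ • 1 := by rw [← h]; abel
  have hs : Summable fun n : ℕ => ((n ! : ℂ))⁻¹ • a ^ n := expSeries_summable' a
  have hexp : exp a = ∑' n : ℕ, ((n ! : ℂ))⁻¹ • a ^ n := by
    rw [exp_eq_tsum ℂ]
  set f : ℕ → A := fun n => (((n ! : ℂ))⁻¹ • a ^ n) * b - b * (((n ! : ℂ))⁻¹ • a ^ n)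
    with hf
  have hfs : Summable f := (hs.mul_right b).sub (hs.mul_left b)
  have hf0 : f 0 = 0 := by simp [hf]
  have hfsucc : ∀ n : ℕ, f (n + 1) = μ • (((n ! : ℂ))⁻¹ • a ^ n) := by
    intro n
    have key := pow_comm_central a b μ h' n
    have h3 : f (n + 1) = (((n + 1)! : ℂ))⁻¹ • (a ^ (n + 1) * b - b * a ^ (n + 1)) := by
      simp [hf, smul_mul_assoc, mul_smul_comm, smul_sub]
    rw [h3, key, add_sub_cancel_left, smul_smul]
    have hfac : (((n + 1)! : ℂ))⁻¹ * (((n : ℂ) + 1) * μ) = μ * ((n ! : ℂ))⁻¹ := by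
      rw [Nat.factorial_succ]
      have h4 : ((n ! : ℂ)) ≠ 0 := Nat.cast_ne_zero.mpr (Nat.factorial_ne_zero n)
      have h5 : ((n : ℂ) + 1) ≠ 0 := Nat.cast_add_one_ne_zero n
      push_cast
      field_simp
    rw [hfac, mul_smul]
  have htsum : ∑' n, f n = μ • exp a := by
    rw [Summable.tsum_eq_zero_add hfs, hf0, zero_add]
    simp_rw [hfsucc]
    rw [Summable.tsum_const_smul _ hs, hexp]
  have h1 : exp a * b - b * exp a = ∑' n, f n := by
    rw [hexp, ← hs.tsum_mul_right b, ← hs.tsum_mul_left b]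
    exact (Summable.tsum_sub (hs.mul_right b) (hs.mul_left b)).symm
  have h6 := h1.trans htsum
  linear_combination (norm := module) h6

lemma exp_exp_central {A : Type*} [NormedRing A] [NormedAlgebra ℂ A]
    [CompleteSpace A] (a b : A) (μ : ℂ) (h : a * b - b * a = μ • 1) :
    exp a * exp b = Complex.exp μ • (exp b * exp a) := by
  letI : NormedAlgebra ℚ A := NormedAlgebra.restrictScalars ℚ ℂ A
  obtain ⟨u, hu⟩ := isUnit_exp a
  have hconj : (u : A) * b * (↑u⁻¹ : A) = b + μ • 1 := by
    have h1 : (u : A) * b = (b + μ • 1) * (u : A) := by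
      rw [hu, exp_mul_central a b μ h, add_mul, smul_mul_assoc, one_mul]
    rw [h1, mul_assoc, Units.mul_inv, mul_one]
  have h2 : exp (b + μ • 1) = (u : A) * exp b * (↑u⁻¹ : A) := by
    rw [← hconj, exp_units_conj]
  have h3 : exp (b + μ • (1 : A)) = Complex.exp μ • exp b := by
    rw [exp_add_of_commute ((Commute.one_right b).smul_right μ)]
    have h5 : exp (μ • (1 : A)) = Complex.exp μ • 1 := by
      rw [← Algebra.algebraMap_eq_smul_one, ← algebraMap_exp_comm,
        ← Complex.exp_eq_exp_ℂ, Algebra.algebraMap_eq_smul_one]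
    rw [h5, mul_smul_comm, mul_one]
  have h4 : (u : A) * exp b = Complex.exp μ • exp b * (u : A) := by
    have h6 : (u : A) * exp b * (↑u⁻¹ : A) = Complex.exp μ • exp b := h2.symm.trans h3
    calc (u : A) * exp b = ((u : A) * exp b * (↑u⁻¹ : A)) * (u : A) := by
          rw [mul_assoc, Units.inv_mul, mul_one]
      _ = Complex.exp μ • exp b * (u : A) := by rw [h6]
  rw [← hu, h4, smul_mul_assoc]

/-- If `P·Q − Q·P = −(ic)·1`, then the Weyl commutation relation
`exp(isP)·exp(itQ) = e^{icst}·(exp(itQ)·exp(isP))` holds for all real `s, t`. -/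
theorem heisenberg_implies_weyl (A : Type*) [NormedRing A] [NormedAlgebra ℂ A]
    [CompleteSpace A] (P Q : A) (c : ℝ)
    (hH : P * Q - Q * P = (-(Complex.I * c)) • (1 : A)) :
    ∀ s t : ℝ,
      exp ((Complex.I * s) • P) * exp ((Complex.I * t) • Q)
        = Complex.exp (Complex.I * c * s * t) •
            (exp ((Complex.I * t) • Q) * exp ((Complex.I * s) • P)) := by
  intro s t
  have hcomm : ((Complex.I * s) • P) * ((Complex.I * t) • Q)
      - ((Complex.I * t) • Q) * ((Complex.I * s) • P)
      = (Complex.I * c * s * t) • (1 : A) := by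
    rw [smul_mul_smul_comm, smul_mul_smul_comm,
      mul_comm (Complex.I * (t : ℂ)) (Complex.I * (s : ℂ)), ← smul_sub, hH, smul_smul]
    congr 1
    have hI : Complex.I * Complex.I = -1 := Complex.I_mul_I
    linear_combination (-(s : ℂ) * t * Complex.I * c) * hI
  exact exp_exp_central _ _ _ hcomm
end

section
/- Let A be a complex unital Banach algebra, P, Q ∈ A, and c ∈ ℝ with P·Q − Q·P = −(ic)·1. Define W_{s,t} := exp(isP)·exp(itQ) for s, t ∈ ℝ. Then the addition law W_{s+s′, t+t′} = e^{ics′t}·(W_{s,t}·W_{s′,t′}) holds for all s, s′, t, t′ ∈ ℝ; that is, (s,t) ↦ W_{s,t} is a projective (ray) representation of the additive group ℝ², multiplicative up to the phase factor e^{ics′t}. -/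
open NormedSpace
set_option maxHeartbeats 1000000

section Aux

variable {A : Type*} [NormedRing A] [NormedAlgebra ℂ A] [CompleteSpace A]

private lemma pow_succ_mul_of_comm (a b : A) (θ : ℂ) (h : a * b = b * a + θ • 1) :
    ∀ n : ℕ, a ^ (n + 1) * b = b * a ^ (n + 1) + (((n : ℂ) + 1) * θ) • a ^ n := by
  intro n
  induction n with
  | zero => simpa using h
  | succ n ih =>
    have key : a ^ (n + 2) * b = a ^ (n + 1) * (a * b) := by
      rw [pow_succ, mul_assoc]
    calc a ^ (n + 2) * b = a ^ (n + 1) * (b * a) + θ • a ^ (n + 1) := by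
          rw [key, h, mul_add, mul_smul_comm, mul_one]
      _ = (a ^ (n + 1) * b) * a + θ • a ^ (n + 1) := by rw [mul_assoc]
      _ = (b * a ^ (n + 1) + (((n : ℂ) + 1) * θ) • a ^ n) * a + θ • a ^ (n + 1) := by
          rw [ih]
      _ = b * a ^ (n + 2) + (((n : ℂ) + 1) * θ) • a ^ (n + 1) + θ • a ^ (n + 1) := by
          rw [add_mul, smul_mul_assoc, mul_assoc, ← pow_succ, ← pow_succ]
      _ = b * a ^ (n + 1 + 1) + (((n + 1 : ℕ) : ℂ) + 1) • θ • a ^ (n + 1) := by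
          rw [add_assoc, ← add_smul]
          push_cast
          rw [smul_smul]
          congr 2
          ring
      _ = b * a ^ (n + 1 + 1) + ((((n + 1 : ℕ) : ℂ) + 1) * θ) • a ^ (n + 1) := by
          rw [smul_smul]

private lemma exp_mul_right_of_comm (a b : A) (θ : ℂ) (h : a * b = b * a + θ • 1) :
    exp a * b = b * exp a + θ • exp a := by
  have hs := expSeries_summable' (𝕂 := ℂ) a
  have hab : Summable (fun n : ℕ => ((n.factorial : ℂ)⁻¹ • a ^ n) * b) := hs.mul_right b
  have hb : Summable (fun n : ℕ => (n.factorial : ℂ)⁻¹ • (b * a ^ n)) := by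
    simpa [mul_smul_comm] using hs.mul_left b
  have hθ : Summable (fun n : ℕ => θ • ((n.factorial : ℂ)⁻¹ • a ^ n)) := hs.const_smul θ
  have hshift : ∀ n : ℕ,
      ((n + 1).factorial : ℂ)⁻¹ • (a ^ (n + 1) * b)
        = ((n + 1).factorial : ℂ)⁻¹ • (b * a ^ (n + 1))
          + θ • ((n.factorial : ℂ)⁻¹ • a ^ n) := by
    intro n
    rw [pow_succ_mul_of_comm a b θ h n, smul_add, smul_smul, smul_smul]
    congr 2
    have hne : ((n : ℂ) + 1) ≠ 0 := by
      exact_mod_cast Nat.cast_add_one_ne_zero (R := ℂ) n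
    have hne' : ((n.factorial : ℂ)) ≠ 0 := by
      exact_mod_cast Nat.factorial_ne_zero n
    have hfac : (((n + 1).factorial : ℕ) : ℂ) = ((n : ℂ) + 1) * (n.factorial : ℂ) := by
      push_cast [Nat.factorial_succ]
      ring
    rw [hfac]
    field_simp
  have hbshift : Summable (fun n : ℕ => (((n + 1).factorial : ℂ))⁻¹ • (b * a ^ (n + 1))) :=
    (summable_nat_add_iff 1).2 hb
  have hbexp : b * exp a = ∑' n : ℕ, (n.factorial : ℂ)⁻¹ • (b * a ^ n) := by
    rw [exp_eq_tsum ℂ, ← hs.tsum_mul_left b]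
    exact tsum_congr fun n => (mul_smul_comm _ _ _)
  calc exp a * b = ∑' n : ℕ, ((n.factorial : ℂ)⁻¹ • a ^ n) * b := by
        rw [exp_eq_tsum ℂ, ← hs.tsum_mul_right b]
    _ = (((0 : ℕ).factorial : ℂ)⁻¹ • a ^ 0) * b
          + ∑' n : ℕ, (((n + 1).factorial : ℂ))⁻¹ • (a ^ (n + 1) * b) := by
        rw [Summable.tsum_eq_zero_add hab]
        congr 1
        exact tsum_congr fun n => (smul_mul_assoc _ _ _)
    _ = b + (∑' n : ℕ, (((n + 1).factorial : ℂ))⁻¹ • (b * a ^ (n + 1))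
          + ∑' n : ℕ, θ • ((n.factorial : ℂ)⁻¹ • a ^ n)) := by
        congr 1
        · simp
        · rw [← Summable.tsum_add hbshift hθ]
          exact tsum_congr hshift
    _ = (b + ∑' n : ℕ, (((n + 1).factorial : ℂ))⁻¹ • (b * a ^ (n + 1)))
          + ∑' n : ℕ, θ • ((n.factorial : ℂ)⁻¹ • a ^ n) := by
        rw [add_assoc]
    _ = b * exp a + θ • exp a := by
        congr 1
        · rw [hbexp, Summable.tsum_eq_zero_add hb]
          simp
        · rw [exp_eq_tsum ℂ, ← Summable.tsum_const_smul θ hs]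

private lemma exp_mul_exp_of_comm (a b : A) (θ : ℂ) (h : a * b - b * a = θ • 1) :
    exp a * exp b = Complex.exp θ • (exp b * exp a) := by
  have h' : a * b = b * a + θ • 1 := by rw [← h]; abel
  have hpow : ∀ n : ℕ, exp a * b ^ n = (b + θ • 1) ^ n * exp a := by
    intro n
    induction n with
    | zero => simp
    | succ n ih =>
      calc exp a * b ^ (n + 1) = (exp a * b ^ n) * b := by
            rw [pow_succ, ← mul_assoc]
        _ = (b + θ • 1) ^ n * (exp a * b) := by rw [ih, mul_assoc]
        _ = (b + θ • 1) ^ n * ((b + θ • 1) * exp a) := by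
            rw [exp_mul_right_of_comm a b θ h', add_mul, smul_mul_assoc, one_mul]
        _ = (b + θ • 1) ^ (n + 1) * exp a := by rw [pow_succ, mul_assoc]
  have hsb := expSeries_summable' (𝕂 := ℂ) b
  have hsb' := expSeries_summable' (𝕂 := ℂ) (b + θ • (1 : A))
  have step : exp a * exp b = exp (b + θ • 1) * exp a := by
    calc exp a * exp b = exp a * ∑' n : ℕ, ((n.factorial : ℂ)⁻¹ • b ^ n) := by
          rw [exp_eq_tsum ℂ]
      _ = ∑' n : ℕ, exp a * ((n.factorial : ℂ)⁻¹ • b ^ n) :=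
          (hsb.tsum_mul_left (exp a)).symm
      _ = ∑' n : ℕ, ((n.factorial : ℂ)⁻¹ • (b + θ • 1) ^ n) * exp a := by
          refine tsum_congr fun n => ?_
          rw [mul_smul_comm, hpow n, smul_mul_assoc]
      _ = (∑' n : ℕ, ((n.factorial : ℂ)⁻¹ • (b + θ • 1) ^ n)) * exp a :=
          hsb'.tsum_mul_right (exp a)
      _ = exp (b + θ • 1) * exp a := by
          rw [exp_eq_tsum ℂ]
  have hcomm : Commute (θ • (1 : A)) b := (Commute.one_left b).smul_left θ
  have hsplit : exp (b + θ • (1 : A)) = Complex.exp θ • exp b := by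
    letI : NormedAlgebra ℚ A := .restrictScalars ℚ ℂ A
    rw [add_comm, exp_add_of_commute hcomm]
    have h1 : exp (θ • (1 : A)) = Complex.exp θ • (1 : A) := by
      rw [← Algebra.algebraMap_eq_smul_one, ← algebraMap_exp_comm,
        Algebra.algebraMap_eq_smul_one, Complex.exp_eq_exp_ℂ]
    rw [h1, smul_mul_assoc, one_mul]
  rw [step, hsplit, smul_mul_assoc]

end Aux

/-- The Weyl operators `W_{s,t} = exp(isP)·exp(itQ)` associated to elements `P, Q` of a
complex unital Banach algebra. -/
noncomputable def weylOp {A : Type*} [NormedRing A] [NormedAlgebra ℂ A]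
    [CompleteSpace A] (P Q : A) (s t : ℝ) : A :=
  exp ((Complex.I * s) • P) * exp ((Complex.I * t) • Q)

/-- If `P·Q − Q·P = −(ic)·1`, then the Weyl operators `W_{s,t} = exp(isP)·exp(itQ)`
satisfy the addition law `W_{s+s′,t+t′} = e^{ics′t}·(W_{s,t}·W_{s′,t′})`: they form a
projective (ray) representation of the additive group `ℝ²`, multiplicative up to the
phase factor `e^{ics′t}`. -/
theorem weylOp_addition_law (A : Type*) [NormedRing A] [NormedAlgebra ℂ A]
    [CompleteSpace A] (P Q : A) (c : ℝ)
    (hH : P * Q - Q * P = (-(Complex.I * c)) • (1 : A)) :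
    ∀ s s' t t' : ℝ,
      weylOp P Q (s + s') (t + t')
        = Complex.exp (Complex.I * c * s' * t) • (weylOp P Q s t * weylOp P Q s' t') := by
  intro s s' t t'
  unfold weylOp
  have hPsplit : exp ((Complex.I * (s + s' : ℝ)) • P)
      = exp ((Complex.I * s) • P) * exp ((Complex.I * s') • P) := by
    letI : NormedAlgebra ℚ A := .restrictScalars ℚ ℂ A
    rw [← exp_add_of_commute (((Commute.refl P).smul_left _).smul_right _)]
    congr 1
    rw [← add_smul]
    congr 1
    push_cast
    ring
  have hQsplit : exp ((Complex.I * (t + t' : ℝ)) • Q)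
      = exp ((Complex.I * t) • Q) * exp ((Complex.I * t') • Q) := by
    letI : NormedAlgebra ℚ A := .restrictScalars ℚ ℂ A
    rw [← exp_add_of_commute (((Commute.refl Q).smul_left _).smul_right _)]
    congr 1
    rw [← add_smul]
    congr 1
    push_cast
    ring
  have hQP : Q * P - P * Q = (Complex.I * c) • (1 : A) := by
    have h2 := congrArg Neg.neg hH
    rw [neg_sub, neg_smul, neg_neg] at h2
    exact h2
  have hkey : ((Complex.I * t) • Q) * ((Complex.I * s') • P)
      - ((Complex.I * s') • P) * ((Complex.I * t) • Q)
      = (-(Complex.I * c * s' * t)) • (1 : A) := by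
    rw [smul_mul_smul_comm, smul_mul_smul_comm,
      mul_comm (Complex.I * (s' : ℂ)) (Complex.I * (t : ℂ)), ← smul_sub, hQP, smul_smul]
    congr 1
    linear_combination (Complex.I * (c : ℂ) * (s' : ℂ) * (t : ℂ)) * Complex.I_sq
  have hswap := exp_mul_exp_of_comm ((Complex.I * t) • Q) ((Complex.I * s') • P)
    (-(Complex.I * c * s' * t)) hkey
  rw [hPsplit, hQsplit,
    mul_assoc (exp ((Complex.I * s) • P)) (exp ((Complex.I * t) • Q)),
    ← mul_assoc (exp ((Complex.I * t) • Q)) (exp ((Complex.I * s') • P)),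
    hswap, smul_mul_assoc, mul_smul_comm, smul_smul, ← Complex.exp_add, add_neg_cancel,
    Complex.exp_zero, one_smul]
  simp only [mul_assoc]
end

section
/- The Schrödinger representation is irreducible: if U is a closed linear subspace of L²(ℝ, ℂ) that is invariant under every translation operator T_t (induced by f ↦ f(· − t), t ∈ ℝ) and under every modulation operator M_s (induced by f ↦ (x ↦ e^{isx} f(x)), s ∈ ℝ), then U = {0} or U = L²(ℝ, ℂ). -/
open MeasureTheory Complex FourierTransform Real
open scoped ContDiff
set_option maxHeartbeats 1000000

noncomputable def hcsSchwartz {g : ℝ → ℂ} (hg : ContDiff ℝ ∞ g) (hsupp : HasCompactSupport g) :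
    SchwartzMap ℝ ℂ where
  toFun := g
  smooth' := hg
  decay' := by
    intro k n
    have h1 : Continuous fun x : ℝ => ‖x‖ ^ k * ‖iteratedFDeriv ℝ n g x‖ :=
      (continuous_norm.pow k).mul (hg.continuous_iteratedFDeriv (by exact_mod_cast le_top)).norm
    have h2 : HasCompactSupport fun x : ℝ => ‖x‖ ^ k * ‖iteratedFDeriv ℝ n g x‖ :=
      ((hsupp.iteratedFDeriv n).norm).mul_left
    obtain ⟨C, hC⟩ := h1.bounded_above_of_compact_support h2
    refine ⟨C, fun x => ?_⟩
    have := hC x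
    rw [Real.norm_eq_abs] at this
    exact (le_abs_self _).trans this

lemma fourierIntegral_zero_ae_zero {F : ℝ → ℂ} (hF : Integrable F volume)
    (h : ∀ ξ : ℝ, 𝓕 F ξ = 0) : ∀ᵐ x ∂(volume : Measure ℝ), F x = 0 := by
  apply ae_eq_zero_of_integral_contDiff_smul_eq_zero hF.locallyIntegrable
  intro g g_diff g_supp
  have hgC : ContDiff ℝ ∞ fun x : ℝ => (g x : ℂ) :=
    Complex.ofRealCLM.contDiff.comp g_diff
  have hgCs : HasCompactSupport fun x : ℝ => (g x : ℂ) :=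
    g_supp.comp_left (g := Complex.ofReal) Complex.ofReal_zero
  set G : SchwartzMap ℝ ℂ := hcsSchwartz hgC hgCs with hGdef
  set ψ : SchwartzMap ℝ ℂ := (SchwartzMap.fourierTransformCLE ℂ (SchwartzMap ℝ ℂ)).symm G with hψ
  have hGψ : SchwartzMap.fourierTransformCLE ℂ (SchwartzMap ℝ ℂ) ψ = G :=
    (SchwartzMap.fourierTransformCLE ℂ (SchwartzMap ℝ ℂ)).apply_symm_apply G
  have hfour : ∀ x : ℝ, 𝓕 (⇑ψ) x = (g x : ℂ) := by
    intro x
    calc 𝓕 (⇑ψ) x = (SchwartzMap.fourierTransformCLE ℂ (SchwartzMap ℝ ℂ) ψ) x := by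
          rfl
      _ = G x := by rw [hGψ]
      _ = (g x : ℂ) := rfl
  have hflip : (innerₗ ℝ).flip = innerₗ ℝ :=
    LinearMap.ext₂ fun x y => real_inner_comm x y
  have key := VectorFourier.integral_fourierIntegral_smul_eq_flip (e := Real.fourierChar)
      (L := innerₗ ℝ) (μ := (volume : Measure ℝ)) (ν := (volume : Measure ℝ))
      Real.continuous_fourierChar continuous_inner ψ.integrable hF
  rw [hflip] at key
  have key2 : ∫ x : ℝ, 𝓕 (⇑ψ) x • F x
      = ∫ x : ℝ, ψ x • 𝓕 F x := key
  calc ∫ x : ℝ, g x • F x = ∫ x : ℝ, 𝓕 (⇑ψ) x • F x := by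
        congr 1; ext x; rw [hfour x, Complex.real_smul, smul_eq_mul]
    _ = ∫ x : ℝ, ψ x • 𝓕 F x := key2
    _ = 0 := by simp [h]

set_option maxHeartbeats 2000000 in
/-- The Schrödinger representation is irreducible: a closed subspace of `L²(ℝ, ℂ)`
invariant under all translations `f ↦ f(· − t)` and all modulations
`f ↦ (x ↦ e^{isx} f(x))` is `{0}` or all of `L²(ℝ, ℂ)`. -/
theorem schroedinger_representation_irreducible
    (U : Submodule ℂ (Lp ℂ 2 (volume : Measure ℝ)))
    (hclosed : IsClosed (U : Set (Lp ℂ 2 (volume : Measure ℝ))))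
    (htrans : ∀ (t : ℝ), ∀ f ∈ U, ∀ g : Lp ℂ 2 (volume : Measure ℝ),
      (⇑g =ᵐ[volume] fun x => f (x - t)) → g ∈ U)
    (hmod : ∀ (s : ℝ), ∀ f ∈ U, ∀ g : Lp ℂ 2 (volume : Measure ℝ),
      (⇑g =ᵐ[volume] fun x => Complex.exp (Complex.I * s * x) * f x) → g ∈ U) :
    U = ⊥ ∨ U = ⊤ := by
  by_cases hbot : U = ⊥
  · exact Or.inl hbot
  right
  haveI : CompleteSpace U := hclosed.completeSpace_coe
  rw [← Submodule.orthogonal_eq_bot_iff]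
  obtain ⟨f, hfU, hf0⟩ := U.ne_bot_iff.mp hbot
  rw [Submodule.eq_bot_iff]
  intro g hg
  -- Step 1: for every t, the L¹ function x ↦ conj (f (x - t)) * g x has vanishing
  -- Fourier transform, hence vanishes a.e.
  have hzero : ∀ t : ℝ, ∀ᵐ x ∂(volume : Measure ℝ),
      (starRingEnd ℂ) (f (x - t)) * g x = 0 := by
    intro t
    have hmemT : MemLp (fun x : ℝ => f (x - t)) 2 volume :=
      (Lp.memLp f).comp_measurePreserving (measurePreserving_sub_right volume t)
    set Tt : Lp ℂ 2 (volume : Measure ℝ) := hmemT.toLp _ with hTt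
    have hTtcoe : ⇑Tt =ᵐ[volume] fun x : ℝ => f (x - t) := hmemT.coeFn_toLp
    have hTtU : Tt ∈ U := htrans t f hfU Tt hTtcoe
    have hInt : Integrable (fun x : ℝ => (starRingEnd ℂ) (f (x - t)) * g x) volume := by
      have h1 := MeasureTheory.L2.integrable_inner (𝕜 := ℂ) Tt g
      simp_rw [RCLike.inner_apply'] at h1
      refine h1.congr ?_
      filter_upwards [hTtcoe] with x hx
      rw [hx]
    apply fourierIntegral_zero_ae_zero hInt
    intro ξ
    set s : ℝ := 2 * Real.pi * ξ with hs
    have hexp1 : ∀ x : ℝ, ‖Complex.exp (Complex.I * s * x)‖ = 1 := by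
      intro x
      have h2 : Complex.I * s * x = ((s * x : ℝ) : ℂ) * Complex.I := by push_cast; ring
      rw [h2, Complex.norm_exp_ofReal_mul_I]
    have hmemM : MemLp (fun x : ℝ => Complex.exp (Complex.I * s * x) * Tt x) 2 volume := by
      refine (Lp.memLp Tt).of_le ?_ ?_
      · exact ((Complex.continuous_exp.comp (by continuity)).aestronglyMeasurable).mul
          (Lp.aestronglyMeasurable Tt)
      · filter_upwards with x
        rw [norm_mul, hexp1, one_mul]
    set Ms : Lp ℂ 2 (volume : Measure ℝ) := hmemM.toLp _ with hMs
    have hMscoe : ⇑Ms =ᵐ[volume] fun x : ℝ => Complex.exp (Complex.I * s * x) * Tt x :=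
      hmemM.coeFn_toLp
    have hMsU : Ms ∈ U := hmod s Tt hTtU Ms hMscoe
    have hinner : (inner ℂ Ms g : ℂ) = 0 := (Submodule.mem_orthogonal U g).mp hg Ms hMsU
    rw [MeasureTheory.L2.inner_def] at hinner
    rw [Real.fourier_real_eq_integral_exp_smul]
    rw [← hinner]
    refine integral_congr_ae ?_
    filter_upwards [hMscoe, hTtcoe] with x hx1 hx2
    have hce : (starRingEnd ℂ) (Complex.exp (Complex.I * ↑s * ↑x))
        = Complex.exp (↑(-2 * Real.pi * x * ξ) * Complex.I) := by
      rw [← Complex.exp_conj]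
      congr 1
      simp only [map_mul, Complex.conj_I, Complex.conj_ofReal]
      push_cast [hs]
      ring
    rw [RCLike.inner_apply, hx1, map_mul, hx2, hce, smul_eq_mul]
    ring
  -- Step 2: Fubini to conclude g = 0 a.e.
  have hf₀ : StronglyMeasurable (⇑f) := Lp.stronglyMeasurable f
  have hg₀ : StronglyMeasurable (⇑g) := Lp.stronglyMeasurable g
  have hφ : Measurable fun p : ℝ × ℝ => (starRingEnd ℂ) (f (p.2 - p.1)) * g p.2 := by
    have h1 : Measurable fun p : ℝ × ℝ => f (p.2 - p.1) :=
      hf₀.measurable.comp (measurable_snd.sub measurable_fst)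
    exact ((Complex.conjLIE.continuous.measurable).comp h1).mul
      (hg₀.measurable.comp measurable_snd)
  set S : Set (ℝ × ℝ) := {p | (starRingEnd ℂ) (f (p.2 - p.1)) * g p.2 ≠ 0} with hSdef
  have hS : MeasurableSet S := (hφ (measurableSet_singleton 0).compl)
  have hSnull : (volume.prod volume) S = 0 := by
    rw [Measure.measure_prod_null hS]
    refine Filter.Eventually.of_forall fun t => ?_
    have := hzero t
    rw [MeasureTheory.ae_iff] at this
    exact this
  set S' : Set (ℝ × ℝ) := Prod.swap ⁻¹' S with hS'def
  have hS' : MeasurableSet S' := measurable_swap hS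
  have hS'null : (volume.prod volume) S' = 0 := by
    have hmap := Measure.map_apply (measurable_swap (α := ℝ) (β := ℝ)) hS
      (μ := (volume : Measure ℝ).prod volume)
    rw [Measure.prod_swap] at hmap
    rw [hS'def, ← hmap, hSnull]
  have hslices := (Measure.measure_prod_null hS').mp hS'null
  have hgae : ∀ᵐ x ∂(volume : Measure ℝ), g x = 0 := by
    filter_upwards [hslices] with x hx
    by_contra hgx
    -- the set of t with f (x - t) ≠ 0 is null
    have hsub : {t : ℝ | f (x - t) ≠ 0} ⊆ Prod.mk x ⁻¹' S' := by
      intro t ht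
      simp only [hS'def, hSdef, Set.mem_preimage, Set.mem_setOf_eq, Prod.swap_prod_mk]
      exact mul_ne_zero (by simpa using ht) hgx
    have hnull : (volume : Measure ℝ) {t : ℝ | f (x - t) ≠ 0} = 0 :=
      measure_mono_null hsub hx
    have hmp := Measure.measurePreserving_sub_left (volume : Measure ℝ) x
    have hfnull : (volume : Measure ℝ) ((⇑f) ⁻¹' {0}ᶜ) = 0 := by
      rw [← hmp.measure_preimage
        ((hf₀.measurable (measurableSet_singleton 0).compl).nullMeasurableSet)]
      refine measure_mono_null (fun t ht => ?_) hnull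
      simpa using ht
    have hfz : ∀ᵐ y ∂(volume : Measure ℝ), f y = 0 := by
      rw [MeasureTheory.ae_iff]
      convert hfnull using 2
      ext y; simp
    have : f = 0 := by
      rw [Lp.eq_zero_iff_ae_eq_zero]
      filter_upwards [hfz] with y hy using hy
    exact hf0 this
  rw [Lp.eq_zero_iff_ae_eq_zero]
  filter_upwards [hgae] with y hy using hy
end
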